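/- arXiv:0709.4350 — 2 statements merged into one kernel-verified Lean document; each statement's English description precedes it below -/
import Mathlib

section
/- Let V and W be complex vector spaces and c : V × V → W a bilinear alternating map (a 'cup product'). Suppose dim V ≥ 2 is finite and there exists an alternating trilinear form μ ≠ 0 on V and a linear functional structure such that c is determined by μ via a perfect pairing (i.e., c(x,y) = 0 iff μ(x,y,z) = 0 for all z ∈ V). Then the image of c is not 1-dimensional. -/
theorem cup_product_image_not_one_dimensional
    (V : Type*) [AddCommGroup V] [Module ℂ V] [FiniteDimensional ℂ V]
    (hV : 2 ≤ Module.finrank ℂ V)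
    (μ : V [⋀^Fin 3]→ₗ[ℂ] ℂ) (hμ : μ ≠ 0)
    (c : V → V → Module.Dual ℂ V)
    (hc : ∀ x y z : V, c x y z = μ ![x, y, z]) :
    Module.finrank ℂ (Submodule.span ℂ {w : Module.Dual ℂ V | ∃ x y : V, w = c x y}) ≠ 1 := by
  intro h1
  set S : Submodule ℂ (Module.Dual ℂ V) :=
    Submodule.span ℂ {w : Module.Dual ℂ V | ∃ x y : V, w = c x y} with hS
  -- S ≠ ⊥
  have hSbot : S ≠ ⊥ := by
    intro hb
    rw [hb] at h1
    simp at h1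
  obtain ⟨f, hfS, hf0⟩ := Submodule.exists_mem_ne_zero_of_ne_bot hSbot
  have hspan : (ℂ ∙ f) = S := by
    apply Submodule.eq_of_le_of_finrank_le (Submodule.span_le.2 (by simpa using hfS))
    rw [h1, finrank_span_singleton hf0]
  -- every c x y is a multiple of f
  have hmul : ∀ x y : V, ∃ t : ℂ, c x y = t • f := by
    intro x y
    have : c x y ∈ S := Submodule.subset_span ⟨x, y, rfl⟩
    rw [← hspan, Submodule.mem_span_singleton] at this
    obtain ⟨t, ht⟩ := this
    exact ⟨t, ht.symm⟩
  -- key vanishing: third slot in ker f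
  have key3 : ∀ x y z : V, f z = 0 → μ ![x, y, z] = 0 := by
    intro x y z hz
    obtain ⟨t, ht⟩ := hmul x y
    have := hc x y z
    rw [ht] at this
    simp [hz] at this
    exact this.symm
  -- linearity helpers in slot 2 and 3
  have upd3 : ∀ (x y a : V), Function.update ![x, y, x] 2 a = ![x, y, a] := by
    intro x y a; ext i; fin_cases i <;> simp
  have upd2 : ∀ (x y a : V), Function.update ![x, y, y] 1 a = ![x, a, y] := by
    intro x y a; ext i; fin_cases i <;> simp
  have add3 : ∀ (x y a b : V), μ ![x, y, a + b] = μ ![x, y, a] + μ ![x, y, b] := by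
    intro x y a b
    have := μ.map_update_add ![x, y, x] 2 a b
    simpa [upd3] using this
  have smul3 : ∀ (x y a : V) (s : ℂ), μ ![x, y, s • a] = s • μ ![x, y, a] := by
    intro x y a s
    have := μ.map_update_smul ![x, y, x] 2 s a
    simpa [upd3] using this
  have add2 : ∀ (x a b y : V), μ ![x, a + b, y] = μ ![x, a, y] + μ ![x, b, y] := by
    intro x a b y
    have := μ.map_update_add ![x, y, y] 1 a b
    simpa [upd2] using this
  have smul2 : ∀ (x a y : V) (s : ℂ), μ ![x, s • a, y] = s • μ ![x, a, y] := by
    intro x a y s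
    have := μ.map_update_smul ![x, y, y] 1 s a
    simpa [upd2] using this
  -- second slot in ker f
  have key2 : ∀ x y z : V, f y = 0 → μ ![x, y, z] = 0 := by
    intro x y z hy
    have hswap : μ (![x, z, y] ∘ Equiv.swap (1 : Fin 3) 2) = -μ ![x, z, y] :=
      μ.map_swap ![x, z, y] (by decide)
    have hvec : (![x, z, y] ∘ Equiv.swap (1 : Fin 3) 2) = ![x, y, z] := by
      ext i; fin_cases i <;> simp [Equiv.swap_apply_def]
    rw [hvec] at hswap
    rw [hswap, key3 x z y hy, neg_zero]
  -- pick e with f e = 1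
  obtain ⟨e₀, he₀⟩ : ∃ e₀, f e₀ ≠ 0 := by
    by_contra h
    push_neg at h
    exact hf0 (LinearMap.ext fun v => h v)
  set e : V := (f e₀)⁻¹ • e₀ with he
  have hfe : f e = 1 := by simp [he, inv_mul_cancel₀ he₀]
  -- μ vanishes
  have hzero : ∀ x y z : V, μ ![x, y, z] = 0 := by
    intro x y z
    have h3 : μ ![x, y, z] = f z • μ ![x, y, e] := by
      have hk : f (z - f z • e) = 0 := by simp [hfe]
      have := key3 x y (z - f z • e) hk
      have hdecomp : z = (z - f z • e) + f z • e := by abel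
      calc μ ![x, y, z] = μ ![x, y, (z - f z • e) + f z • e] := by rw [← hdecomp]
        _ = μ ![x, y, z - f z • e] + μ ![x, y, f z • e] := add3 _ _ _ _
        _ = f z • μ ![x, y, e] := by rw [this, smul3]; ring
    have h2 : μ ![x, y, e] = f y • μ ![x, e, e] := by
      have hk : f (y - f y • e) = 0 := by simp [hfe]
      have := key2 x (y - f y • e) e hk
      have hdecomp : y = (y - f y • e) + f y • e := by abel
      calc μ ![x, y, e] = μ ![x, (y - f y • e) + f y • e, e] := by rw [← hdecomp]
        _ = μ ![x, y - f y • e, e] + μ ![x, f y • e, e] := add2 _ _ _ _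
        _ = f y • μ ![x, e, e] := by rw [this, smul2]; ring
    have hee : μ ![x, e, e] = 0 := μ.map_eq_zero_of_eq ![x, e, e] (i := 1) (j := 2) rfl (by decide)
    rw [h3, h2, hee]
    simp
  apply hμ
  ext v
  have hv : v = ![v 0, v 1, v 2] := by ext i; fin_cases i <;> rfl
  rw [hv]
  simp [hzero]
end

section
/- Let V be an n-dimensional complex vector space with n even, μ a nonzero alternating trilinear form on V, and c : V ∧ V → V* defined by c(x ∧ y)(z) = μ(x,y,z). Then every x ∈ V lies in the first resonance variety: for each x there exists y ∈ V with y ∉ ℂ·x and c(x ∧ y) = 0. -/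
open Module LinearMap

private lemma even_finrank_of_alt_nondeg :
    ∀ (N : ℕ) (W : Type*) [AddCommGroup W] [Module ℂ W] [FiniteDimensional ℂ W]
      (B : LinearMap.BilinForm ℂ W), finrank ℂ W = N → B.IsAlt → B.Nondegenerate → Even N := by
  intro N
  induction N using Nat.strong_induction_on with
  | _ N ih =>
    intro W _ _ _ B hN halt hnd
    rcases Nat.eq_zero_or_pos N with h0 | hpos
    · simp [h0]
    have : 0 < finrank ℂ W := hN ▸ hpos
    have : Nontrivial W := Module.nontrivial_of_finrank_pos this
    obtain ⟨x, hx⟩ := exists_ne (0 : W)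
    have hrefl : B.IsRefl := halt.isRefl
    obtain ⟨y, hxy⟩ : ∃ y, B x y ≠ 0 := by
      by_contra h
      push_neg at h
      exact hx (hnd.1 x h)
    have hy0 : y ≠ 0 := fun h => hxy (by simp [h])
    have hli : LinearIndependent ℂ ![x, y] := by
      rw [LinearIndependent.pair_iff]
      intro s t hst
      have h1 : B (s • x + t • y) y = 0 := by rw [hst]; simp
      simp only [map_add, map_smul, LinearMap.add_apply, LinearMap.smul_apply,
        smul_eq_mul] at h1
      rw [halt y, mul_zero, add_zero] at h1
      have hs : s = 0 := by
        rcases mul_eq_zero.mp h1 with h | h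
        · exact h
        · exact absurd h hxy
      subst hs
      simp only [zero_smul, zero_add, smul_eq_zero] at hst
      exact ⟨rfl, hst.resolve_right hy0⟩
    set V2 : Submodule ℂ W := Submodule.span ℂ (Set.range ![x, y]) with hV2
    have hdim2 : finrank ℂ V2 = 2 := by
      rw [finrank_span_eq_card hli]; simp
    have hxmem : x ∈ V2 := Submodule.subset_span ⟨0, rfl⟩
    have hymem : y ∈ V2 := Submodule.subset_span ⟨1, rfl⟩
    have hspan : ∀ w ∈ V2, ∃ s t : ℂ, s • x + t • y = w := by
      intro w hw
      have : Set.range ![x, y] = ({x, y} : Set W) := by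
        ext v; simp [Matrix.range_cons, Matrix.range_empty]; tauto
      rw [hV2, this] at hw
      exact Submodule.mem_span_pair.mp hw
    have hndV2 : (B.restrict V2).Nondegenerate := by
      refine (LinearMap.IsRefl.nondegenerate_iff_separatingLeft (B := B.restrict V2)
        (fun a b h => hrefl _ _ h)).mpr ?_
      rintro ⟨w, hw⟩ hww
      obtain ⟨s, t, rfl⟩ := hspan w hw
      have h1 : B (s • x + t • y) y = 0 := hww ⟨y, hymem⟩
      have h2 : B (s • x + t • y) x = 0 := hww ⟨x, hxmem⟩
      simp only [map_add, map_smul, LinearMap.add_apply, LinearMap.smul_apply,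
        smul_eq_mul, halt x, halt y, mul_zero, add_zero, zero_add] at h1 h2
      have hyx : B y x = -B x y := by
        have h := LinearMap.IsAlt.neg halt x y
        simpa using h.symm
      have hs : s = 0 := by
        rcases mul_eq_zero.mp h1 with h | h
        · exact h
        · exact absurd h hxy
      have ht : t = 0 := by
        rw [hyx] at h2
        rcases mul_eq_zero.mp h2 with h | h
        · exact h
        · exact absurd (neg_eq_zero.mp h) hxy
      simp [hs, ht]
    have hcompl := B.isCompl_orthogonal_of_restrict_nondegenerate hrefl hndV2
    set V3 := B.orthogonal V2 with hV3
    have horth : B.orthogonal V3 = V2 := B.orthogonal_orthogonal hnd hrefl V2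
    have hndV3 : (B.restrict V3).Nondegenerate := by
      apply B.nondegenerate_restrict_of_disjoint_orthogonal hrefl
      rw [horth]
      exact hcompl.disjoint.symm
    have haltV3 : (B.restrict V3).IsAlt := fun w => halt w
    have hdim3 : finrank ℂ V3 = N - 2 := by
      rw [hV3, B.finrank_orthogonal hnd V2, hdim2, hN]
    have hle : 2 ≤ N := by
      have := Submodule.finrank_le V2
      omega
    have := ih (N - 2) (by omega) V3 (B.restrict V3) hdim3 haltV3 hndV3
    obtain ⟨r, hr⟩ := this
    exact ⟨r + 1, by omega⟩

private lemma upd3_1 {V : Type*} (a b c d : V) :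
    Function.update ![a, b, c] 1 d = ![a, d, c] := by
  funext i; fin_cases i <;> simp

private lemma upd3_2 {V : Type*} (a b c d : V) :
    Function.update ![a, b, c] 2 d = ![a, b, d] := by
  funext i; fin_cases i <;> simp

theorem resonance_is_everything_for_even_rank
    (V : Type*) [AddCommGroup V] [Module ℂ V] [FiniteDimensional ℂ V]
    (n : ℕ) (hn : Module.finrank ℂ V = n) (heven : Even n)
    (μ : V [⋀^Fin 3]→ₗ[ℂ] ℂ) (hμ : μ ≠ 0)
    (c : V [⋀^Fin 2]→ₗ[ℂ] Module.Dual ℂ V)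
    (hc : ∀ x y z : V, c ![x, y] z = μ ![x, y, z]) :
    ∀ x : V, ∃ y : V, y ∉ Submodule.span ℂ {x} ∧ c ![x, y] = 0 := by
  intro x
  -- the skew form B y z = μ ![x, y, z]
  set B : LinearMap.BilinForm ℂ V := LinearMap.mk₂ ℂ (fun y z => μ ![x, y, z])
    (fun y y' z => by
      have h := μ.map_update_add ![x, y, z] 1 y y'
      simpa [upd3_1] using h)
    (fun s y z => by
      have h := μ.map_update_smul ![x, y, z] 1 s y
      simpa [upd3_1] using h)
    (fun y z z' => by
      have h := μ.map_update_add ![x, y, z] 2 z z'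
      simpa [upd3_2] using h)
    (fun s y z => by
      have h := μ.map_update_smul ![x, y, z] 2 s z
      simpa [upd3_2] using h) with hB
  have hBapp : ∀ y z, B y z = μ ![x, y, z] := fun y z => rfl
  have halt : B.IsAlt := by
    intro y
    exact μ.map_eq_zero_of_eq ![x, y, y] (i := 1) (j := 2) rfl (by decide)
  -- it suffices to find y in ker B outside span {x}
  suffices h : ∃ y : V, y ∉ Submodule.span ℂ {x} ∧ ∀ z, B y z = 0 by
    obtain ⟨y, hy1, hy2⟩ := h
    refine ⟨y, hy1, ?_⟩
    ext z
    rw [hc]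
    simpa [hBapp] using hy2 z
  by_contra hcon
  push_neg at hcon
  -- so ker B ≤ span {x}
  have hker : LinearMap.ker B ≤ Submodule.span ℂ {x} := by
    intro y hy
    by_contra hy'
    obtain ⟨z, hz⟩ := hcon y hy'
    exact hz (by rw [LinearMap.mem_ker] at hy; rw [hy]; rfl)
  have hxker : x ∈ LinearMap.ker B := by
    rw [LinearMap.mem_ker]
    ext z
    exact μ.map_eq_zero_of_eq ![x, x, z] (i := 0) (j := 1) rfl (by decide)
  rcases eq_or_ne x 0 with rfl | hx0
  · -- x = 0 : B = 0, so ker = ⊤ ≤ span {0} = ⊥, V trivial, μ = 0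
    have hV : ∀ v : V, v = 0 := by
      intro v
      have hv : v ∈ LinearMap.ker B := by
        rw [LinearMap.mem_ker]
        ext z
        have : B v z = μ ![0, v, z] := rfl
        rw [this]
        exact μ.map_coord_zero 0 rfl
      have := hker hv
      simpa using this
    apply hμ
    ext v
    have : v = 0 := funext fun i => hV (v i)
    rw [this]
    have h0 : μ (0 : Fin 3 → V) = 0 := μ.map_coord_zero (m := 0) 0 rfl
    simp only [show (0 : Fin 3 → V) = fun _ => (0 : V) from rfl] at h0 ⊢
    exact h0
  · -- x ≠ 0 : ker B = span {x}, 1-dimensional; take a complement W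
    have hkeq : LinearMap.ker B = Submodule.span ℂ {x} :=
      le_antisymm hker ((Submodule.span_singleton_le_iff_mem x _).mpr hxker)
    obtain ⟨W, hW⟩ := Submodule.exists_isCompl (LinearMap.ker B)
    have hrefl : B.IsRefl := halt.isRefl
    have hndW : (B.restrict W).Nondegenerate := by
      refine (LinearMap.IsRefl.nondegenerate_iff_separatingLeft (B := B.restrict W)
        (fun a b h => hrefl _ _ h)).mpr ?_
      rintro ⟨w, hw⟩ hww
      have hall : ∀ z, B w z = 0 := by
        intro z
        obtain ⟨k, hk, w', hw', rfl⟩ := Submodule.mem_sup.mp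
          (hW.sup_eq_top ▸ Submodule.mem_top (x := z))
        have h1 : B w w' = 0 := hww ⟨w', hw'⟩
        have h2 : B w k = 0 := by
          apply hrefl
          rw [LinearMap.mem_ker] at hk
          rw [hk]; rfl
        simp [h1, h2]
      have : w ∈ LinearMap.ker B ⊓ W := ⟨by ext z; exact hall z, hw⟩
      rw [hW.inf_eq_bot] at this
      simpa using this
    have haltW : (B.restrict W).IsAlt := fun w => halt w
    have hdimk : Module.finrank ℂ (LinearMap.ker B) = 1 := by
      rw [hkeq, finrank_span_singleton hx0]
    have hsum := Submodule.finrank_add_eq_of_isCompl hW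
    have hEW := even_finrank_of_alt_nondeg (Module.finrank ℂ W) W (B.restrict W) rfl haltW hndW
    rw [hn] at hsum
    obtain ⟨r, hr⟩ := heven
    obtain ⟨s, hs⟩ := hEW
    omega
end
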